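/- If X ~ sExp(λ₁, c) and Y ~ sExp(λ₂, c) are independent, with λ₁, λ₂ > 0 and c ∈ ℝ, then min{X,Y} and X − Y are independent, with min{X,Y} ~ sExp(λ₁+λ₂, c) and X − Y having the asymmetric Laplace distribution AL(λ₁, λ₂). -/

import Mathlib

open MeasureTheory ProbabilityTheory

/-- The shifted exponential distribution `sExp(l, c)`:
density `l * exp (-l * (x - c))` on `[c, ∞)`. -/
noncomputable def sExpMeasure (l c : ℝ) : Measure ℝ :=
  volume.withDensity fun x =>
    ENNReal.ofReal (if c ≤ x then l * Real.exp (-l * (x - c)) else 0)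

/-- The asymmetric Laplace distribution `AL(l₁, l₂)`:
density proportional to `exp (-l₁ * x)` for `x > 0` and `exp (l₂ * x)` for `x < 0`. -/
noncomputable def alMeasure (l₁ l₂ : ℝ) : Measure ℝ :=
  volume.withDensity fun x =>
    ENNReal.ofReal ((l₁ * l₂ / (l₁ + l₂)) *
      (if 0 ≤ x then Real.exp (-l₁ * x) else Real.exp (l₂ * x)))

open Set Real

noncomputable def sExpD (l c : ℝ) : ℝ → ENNReal := fun x =>
  ENNReal.ofReal (if c ≤ x then l * Real.exp (-l * (x - c)) else 0)

noncomputable def alD (l₁ l₂ : ℝ) : ℝ → ENNReal := fun x =>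
  ENNReal.ofReal ((l₁ * l₂ / (l₁ + l₂)) *
    (if 0 ≤ x then Real.exp (-l₁ * x) else Real.exp (l₂ * x)))

lemma sExpD_measurable (l c : ℝ) : Measurable (sExpD l c) := by
  apply Measurable.ennreal_ofReal
  exact Measurable.ite measurableSet_Ici (by fun_prop) measurable_const

lemma alD_measurable (l₁ l₂ : ℝ) : Measurable (alD l₁ l₂) := by
  apply Measurable.ennreal_ofReal
  exact Measurable.const_mul (Measurable.ite measurableSet_Ici (by fun_prop) (by fun_prop)) _

lemma lintegral_exp_Ioi (k l a : ℝ) (hk : 0 ≤ k) (hl : 0 < l) :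
    ∫⁻ x in Set.Ioi a, ENNReal.ofReal (k * Real.exp (-l * x)) =
      ENNReal.ofReal (k * l⁻¹ * Real.exp (-l * a)) := by
  have hint : IntegrableOn (fun x => k * Real.exp (-l * x)) (Set.Ioi a) :=
    (exp_neg_integrableOn_Ioi a hl).const_mul k
  rw [← ofReal_integral_eq_lintegral_ofReal hint
    (Filter.Eventually.of_forall fun x => mul_nonneg hk (Real.exp_pos _).le)]
  congr 1
  rw [integral_const_mul]
  have h1 : ∫ x in Set.Ioi a, Real.exp (-l * x) = l⁻¹ • ∫ x in Set.Ioi (l * a), Real.exp (-x) := by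
    simpa [neg_mul] using integral_comp_mul_left_Ioi (fun y => Real.exp (-y)) a hl
  rw [h1, integral_exp_neg_Ioi, smul_eq_mul, neg_mul]
  ring

lemma sExpD_eq_indicator (l c : ℝ) : sExpD l c =
    (Set.Ici c).indicator (fun x => ENNReal.ofReal (l * Real.exp (-l * (x - c)))) := by
  funext x
  by_cases h : c ≤ x <;> simp [sExpD, Set.indicator, h]

lemma sExpD_lintegral (l c : ℝ) (hl : 0 < l) : ∫⁻ x, sExpD l c x = 1 := by
  rw [sExpD_eq_indicator, lintegral_indicator measurableSet_Ici,
    setLIntegral_congr (Ioi_ae_eq_Ici (a := c)).symm]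
  have h : ∀ x : ℝ, l * Real.exp (-l * (x - c)) = (l * Real.exp (l * c)) * Real.exp (-l * x) := by
    intro x; rw [mul_assoc, ← Real.exp_add]; ring_nf
  simp_rw [h]
  rw [lintegral_exp_Ioi _ l c (by positivity) hl]
  rw [show l * Real.exp (l * c) * l⁻¹ * Real.exp (-l * c) = 1 by
    have h2 : Real.exp (l * c) * Real.exp (-l * c) = 1 := by rw [← Real.exp_add]; simp
    have h3 : l * l⁻¹ = 1 := mul_inv_cancel₀ hl.ne'
    linear_combination l * l⁻¹ * h2 + h3]
  simp

lemma sExp_prob (l c : ℝ) (hl : 0 < l) : IsProbabilityMeasure (sExpMeasure l c) := by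
  constructor
  have : sExpMeasure l c = volume.withDensity (sExpD l c) := rfl
  rw [this, withDensity_apply _ MeasurableSet.univ, Measure.restrict_univ]
  exact sExpD_lintegral l c hl

lemma alD_lintegral (l₁ l₂ : ℝ) (hl₁ : 0 < l₁) (hl₂ : 0 < l₂) :
    ∫⁻ x, alD l₁ l₂ x = 1 := by
  set k := l₁ * l₂ / (l₁ + l₂) with hk
  have hk0 : 0 ≤ k := by positivity
  have hdec : alD l₁ l₂ = fun x =>
      (Set.Ici (0:ℝ)).indicator (fun x => ENNReal.ofReal (k * Real.exp (-l₁ * x))) x +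
      (Set.Iio (0:ℝ)).indicator (fun x => ENNReal.ofReal (k * Real.exp (l₂ * x))) x := by
    funext x
    by_cases h : (0:ℝ) ≤ x
    · simp [alD, Set.indicator, h, not_lt.2 h, hk]
    · simp [alD, Set.indicator, h, lt_of_not_ge h, hk]
  rw [hdec, lintegral_add_left]
  · rw [lintegral_indicator measurableSet_Ici, lintegral_indicator measurableSet_Iio,
      setLIntegral_congr (Ioi_ae_eq_Ici (a := (0:ℝ))).symm, lintegral_exp_Ioi k l₁ 0 hk0 hl₁]
    have hneg := (Measure.measurePreserving_neg (volume : Measure ℝ)).setLIntegral_comp_preimage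
      (measurableSet_Iio (a := (0:ℝ))) (f := fun x => ENNReal.ofReal (k * Real.exp (l₂ * x)))
      (by fun_prop)
    have hpre : (Neg.neg : ℝ → ℝ) ⁻¹' (Set.Iio 0) = Set.Ioi 0 := by
      ext x; simp
    rw [hpre] at hneg
    rw [← hneg]
    simp only [mul_neg, ← neg_mul]
    rw [lintegral_exp_Ioi k l₂ 0 hk0 hl₂]
    rw [← ENNReal.ofReal_add (by positivity) (by positivity)]
    rw [show k * l₁⁻¹ * Real.exp (-l₁ * 0) + k * l₂⁻¹ * Real.exp (-l₂ * 0) = 1 by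
      simp only [mul_zero, neg_zero, Real.exp_zero, mul_one, hk]
      field_simp
      ring]
    simp
  · exact ((ENNReal.measurable_ofReal.comp (by fun_prop)).indicator measurableSet_Ici)

lemma al_prob (l₁ l₂ : ℝ) (hl₁ : 0 < l₁) (hl₂ : 0 < l₂) :
    IsProbabilityMeasure (alMeasure l₁ l₂) := by
  constructor
  have : alMeasure l₁ l₂ = volume.withDensity (alD l₁ l₂) := rfl
  rw [this, withDensity_apply _ MeasurableSet.univ, Measure.restrict_univ]
  exact alD_lintegral l₁ l₂ hl₁ hl₂

lemma measurable_minSub : Measurable (fun p : ℝ × ℝ => (min p.1 p.2, p.1 - p.2)) := by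
  fun_prop

lemma measurePreserving_minSub :
    MeasurePreserving (fun p : ℝ × ℝ => (min p.1 p.2, p.1 - p.2))
      (volume : Measure (ℝ × ℝ)) (volume : Measure (ℝ × ℝ)) := by
  refine ⟨measurable_minSub, ?_⟩
  ext s hs
  rw [Measure.map_apply measurable_minSub hs]
  set φ := fun p : ℝ × ℝ => (min p.1 p.2, p.1 - p.2) with hφ
  have hA : MeasurableSet {p : ℝ × ℝ | p.2 ≤ p.1} := measurableSet_le measurable_snd measurable_fst
  have hB : MeasurableSet {q : ℝ × ℝ | 0 ≤ q.2} := measurableSet_le measurable_const measurable_snd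
  have h1 : φ ⁻¹' s ∩ {p : ℝ × ℝ | p.2 ≤ p.1}
      = (fun p : ℝ × ℝ => (p.2, p.1 - p.2)) ⁻¹' (s ∩ {q : ℝ × ℝ | 0 ≤ q.2}) := by
    ext ⟨x, y⟩
    simp only [Set.mem_inter_iff, Set.mem_preimage, Set.mem_setOf_eq, hφ]
    constructor
    · rintro ⟨h₁, h₂⟩
      rw [min_eq_right h₂] at h₁
      exact ⟨h₁, by linarith⟩
    · rintro ⟨h₁, h₂⟩
      have hyx : y ≤ x := by linarith
      exact ⟨by rw [min_eq_right hyx]; exact h₁, hyx⟩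
  have h2 : φ ⁻¹' s ∩ {p : ℝ × ℝ | p.2 ≤ p.1}ᶜ
      = (fun p : ℝ × ℝ => (p.1, p.1 - p.2)) ⁻¹' (s ∩ {q : ℝ × ℝ | 0 ≤ q.2}ᶜ) := by
    ext ⟨x, y⟩
    simp only [Set.mem_inter_iff, Set.mem_preimage, Set.mem_setOf_eq, Set.mem_compl_iff,
      not_le, hφ]
    constructor
    · rintro ⟨h₁, h₂⟩
      rw [min_eq_left h₂.le] at h₁
      exact ⟨h₁, by linarith⟩
    · rintro ⟨h₁, h₂⟩
      have hxy : x < y := by linarith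
      exact ⟨by rw [min_eq_left hxy.le]; exact h₁, hxy⟩
  have hmp1 : MeasurePreserving (fun p : ℝ × ℝ => (p.2, p.1 - p.2))
      (volume : Measure (ℝ × ℝ)) (volume : Measure (ℝ × ℝ)) := by
    rw [Measure.volume_eq_prod ℝ ℝ]
    exact measurePreserving_prod_sub_swap volume volume
  have hmp2 : MeasurePreserving (fun p : ℝ × ℝ => (p.1, p.1 - p.2))
      (volume : Measure (ℝ × ℝ)) (volume : Measure (ℝ × ℝ)) := by
    have heq : (fun p : ℝ × ℝ => (p.1, p.1 - p.2))
        = (fun z : ℝ × ℝ => (z.1, z.2 + z.1)) ∘ (Prod.map id (Neg.neg : ℝ → ℝ)) := by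
      funext p; simp [Prod.map]; ring
    rw [heq, Measure.volume_eq_prod ℝ ℝ]
    exact (measurePreserving_prod_add_right volume volume).comp
      ((MeasurePreserving.id volume).prod (Measure.measurePreserving_neg volume))
  calc volume (φ ⁻¹' s)
      = volume (φ ⁻¹' s ∩ {p : ℝ × ℝ | p.2 ≤ p.1}) +
        volume (φ ⁻¹' s ∩ {p : ℝ × ℝ | p.2 ≤ p.1}ᶜ) := by
        have h := measure_inter_add_diff (μ := (volume : Measure (ℝ × ℝ))) (φ ⁻¹' s) hA
        rw [Set.diff_eq] at h
        exact h.symm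
    _ = volume (s ∩ {q : ℝ × ℝ | 0 ≤ q.2}) + volume (s ∩ {q : ℝ × ℝ | 0 ≤ q.2}ᶜ) := by
        rw [h1, h2, hmp1.measure_preimage (hs.inter hB).nullMeasurableSet,
          hmp2.measure_preimage (hs.inter hB.compl).nullMeasurableSet]
    _ = volume s := by
        have h := measure_inter_add_diff (μ := (volume : Measure (ℝ × ℝ))) s hB
        rw [Set.diff_eq] at h
        exact h

lemma map_withDensity_comp {α β : Type*} [MeasurableSpace α] [MeasurableSpace β]
    {μ : Measure α} {ν : Measure β} {φ : α → β} (h : MeasurePreserving φ μ ν)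
    {g : β → ENNReal} (hg : Measurable g) :
    (μ.withDensity (fun a => g (φ a))).map φ = ν.withDensity g := by
  ext s hs
  rw [Measure.map_apply h.measurable hs, withDensity_apply _ (h.measurable hs),
    withDensity_apply _ hs]
  exact h.setLIntegral_comp_preimage hs hg

lemma real_aux (l₁ l₂ : ℝ) (hsum : l₁ + l₂ ≠ 0) {A B U V : ℝ} (h : A + B = U + V) :
    l₁ * Real.exp A * (l₂ * Real.exp B) =
      (l₁ + l₂) * Real.exp U * (l₁ * l₂ / (l₁ + l₂) * Real.exp V) := by
  have he : Real.exp A * Real.exp B = Real.exp U * Real.exp V := by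
    rw [← Real.exp_add, ← Real.exp_add, h]
  calc l₁ * Real.exp A * (l₂ * Real.exp B) = (l₁ * l₂) * (Real.exp A * Real.exp B) := by ring
    _ = (l₁ * l₂) * (Real.exp U * Real.exp V) := by rw [he]
    _ = (l₁ + l₂) * Real.exp U * (l₁ * l₂ / (l₁ + l₂) * Real.exp V) := by
        field_simp

lemma withDensity_prod {f g : ℝ → ENNReal} (hf : Measurable f) (hg : Measurable g)
    [SigmaFinite (volume.withDensity f)] [SigmaFinite (volume.withDensity g)] :
    (volume : Measure (ℝ × ℝ)).withDensity (fun p => f p.1 * g p.2) =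
      (volume.withDensity f).prod (volume.withDensity g) := by
  refine (Measure.prod_eq (μ := volume.withDensity f) (ν := volume.withDensity g) fun s t hs ht => ?_).symm
  rw [withDensity_apply _ (hs.prod ht), Measure.volume_eq_prod, ← Measure.prod_restrict,
    lintegral_prod_mul hf.aemeasurable hg.aemeasurable,
    withDensity_apply _ hs, withDensity_apply _ ht]

lemma density_eq (l₁ l₂ c : ℝ) (hl₁ : 0 < l₁) (hl₂ : 0 < l₂) (p : ℝ × ℝ) :
    sExpD l₁ c p.1 * sExpD l₂ c p.2 =
      sExpD (l₁ + l₂) c (min p.1 p.2) * alD l₁ l₂ (p.1 - p.2) := by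
  obtain ⟨x, y⟩ := p
  have hsum : l₁ + l₂ ≠ 0 := by positivity
  simp only [sExpD, alD]
  rcases le_or_gt y x with hyx | hxy
  · rw [min_eq_right hyx, if_pos (by linarith : (0:ℝ) ≤ x - y)]
    by_cases hc : c ≤ y
    · rw [if_pos hc, if_pos (le_trans hc hyx), if_pos hc]
      rw [← ENNReal.ofReal_mul (by positivity), ← ENNReal.ofReal_mul (by positivity)]
      congr 1
      exact real_aux l₁ l₂ hsum (by ring)
    · rw [if_neg hc, if_neg hc]
      simp
  · rw [min_eq_left hxy.le, if_neg (by linarith : ¬ (0:ℝ) ≤ x - y)]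
    by_cases hc : c ≤ x
    · rw [if_pos hc, if_pos (le_trans hc hxy.le), if_pos hc]
      rw [← ENNReal.ofReal_mul (by positivity), ← ENNReal.ofReal_mul (by positivity)]
      congr 1
      exact real_aux l₁ l₂ hsum (by ring)
    · rw [if_neg hc, if_neg hc]
      simp

theorem sExp_min_sub_indep
    {Ω : Type*} [MeasurableSpace Ω] (μ : Measure Ω) [IsProbabilityMeasure μ]
    (l₁ l₂ c : ℝ) (hl₁ : 0 < l₁) (hl₂ : 0 < l₂)
    (X Y : Ω → ℝ) (hX : Measurable X) (hY : Measurable Y)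
    (hindep : IndepFun X Y μ)
    (hlawX : Measure.map X μ = sExpMeasure l₁ c)
    (hlawY : Measure.map Y μ = sExpMeasure l₂ c) :
    IndepFun (fun ω => min (X ω) (Y ω)) (fun ω => X ω - Y ω) μ ∧
      Measure.map (fun ω => min (X ω) (Y ω)) μ = sExpMeasure (l₁ + l₂) c ∧
      Measure.map (fun ω => X ω - Y ω) μ = alMeasure l₁ l₂ := by
  have hl12 : (0:ℝ) < l₁ + l₂ := by positivity
  haveI hp1 : IsProbabilityMeasure (volume.withDensity (sExpD l₁ c)) := sExp_prob l₁ c hl₁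
  haveI hp2 : IsProbabilityMeasure (volume.withDensity (sExpD l₂ c)) := sExp_prob l₂ c hl₂
  haveI hp12 : IsProbabilityMeasure (volume.withDensity (sExpD (l₁ + l₂) c)) :=
    sExp_prob (l₁ + l₂) c hl12
  haveI hpal : IsProbabilityMeasure (volume.withDensity (alD l₁ l₂)) :=
    al_prob l₁ l₂ hl₁ hl₂
  haveI hpal' : IsProbabilityMeasure (alMeasure l₁ l₂) := al_prob l₁ l₂ hl₁ hl₂
  haveI hp12' : IsProbabilityMeasure (sExpMeasure (l₁ + l₂) c) := sExp_prob (l₁ + l₂) c hl12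
  have hsE1 : sExpMeasure l₁ c = volume.withDensity (sExpD l₁ c) := rfl
  have hsE2 : sExpMeasure l₂ c = volume.withDensity (sExpD l₂ c) := rfl
  have hsE12 : sExpMeasure (l₁ + l₂) c = volume.withDensity (sExpD (l₁ + l₂) c) := rfl
  have hal : alMeasure l₁ l₂ = volume.withDensity (alD l₁ l₂) := rfl
  have hXY : Measure.map (fun ω => (X ω, Y ω)) μ =
      (sExpMeasure l₁ c).prod (sExpMeasure l₂ c) := by
    rw [← hlawX, ← hlawY]
    exact (ProbabilityTheory.indepFun_iff_map_prod_eq_prod_map_map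
      hX.aemeasurable hY.aemeasurable).1 hindep
  have hjoint : Measure.map (fun ω => (min (X ω) (Y ω), X ω - Y ω)) μ =
      (sExpMeasure (l₁ + l₂) c).prod (alMeasure l₁ l₂) := by
    have hcomp : (fun ω => (min (X ω) (Y ω), X ω - Y ω)) =
        (fun p : ℝ × ℝ => (min p.1 p.2, p.1 - p.2)) ∘ (fun ω => (X ω, Y ω)) := rfl
    rw [hcomp, ← Measure.map_map measurable_minSub (hX.prodMk hY), hXY]
    rw [hsE1, hsE2, hsE12, hal,
      ← withDensity_prod (sExpD_measurable l₁ c) (sExpD_measurable l₂ c),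
      ← withDensity_prod (sExpD_measurable (l₁ + l₂) c) (alD_measurable l₁ l₂)]
    have hmap := map_withDensity_comp (μ := (volume : Measure (ℝ × ℝ)))
      (ν := (volume : Measure (ℝ × ℝ))) measurePreserving_minSub
      (g := fun q : ℝ × ℝ => sExpD (l₁ + l₂) c q.1 * alD l₁ l₂ q.2)
      (((sExpD_measurable (l₁ + l₂) c).comp measurable_fst).mul
        ((alD_measurable l₁ l₂).comp measurable_snd))
    rw [← hmap]
    exact congrArg (Measure.map (fun p : ℝ × ℝ => (min p.1 p.2, p.1 - p.2)))
      (congrArg (fun f => (volume : Measure (ℝ × ℝ)).withDensity f)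
        (funext fun p => density_eq l₁ l₂ c hl₁ hl₂ p))
  have hmin : Measure.map (fun ω => min (X ω) (Y ω)) μ = sExpMeasure (l₁ + l₂) c := by
    have hcomp : (fun ω => min (X ω) (Y ω)) =
        Prod.fst ∘ (fun ω => (min (X ω) (Y ω), X ω - Y ω)) := rfl
    rw [hcomp, ← Measure.map_map measurable_fst ((hX.min hY).prodMk (by exact hX.sub hY : Measurable (fun ω => X ω - Y ω))), hjoint,
      Measure.map_fst_prod]
    have : (alMeasure l₁ l₂) Set.univ = 1 := hpal.measure_univ
    rw [this, one_smul]
  have hsub : Measure.map (fun ω => X ω - Y ω) μ = alMeasure l₁ l₂ := by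
    have hcomp : (fun ω => X ω - Y ω) =
        Prod.snd ∘ (fun ω => (min (X ω) (Y ω), X ω - Y ω)) := rfl
    rw [hcomp, ← Measure.map_map measurable_snd ((hX.min hY).prodMk (by exact hX.sub hY : Measurable (fun ω => X ω - Y ω))), hjoint,
      Measure.map_snd_prod]
    have : (sExpMeasure (l₁ + l₂) c) Set.univ = 1 := hp12.measure_univ
    rw [this, one_smul]
  refine ⟨?_, hmin, hsub⟩
  rw [ProbabilityTheory.indepFun_iff_map_prod_eq_prod_map_map
    (hX.min hY).aemeasurable (by exact (hX.sub hY).aemeasurable : AEMeasurable (fun ω => X ω - Y ω) μ), hjoint, hmin, hsub]
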